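/- Let G be a connected nonsingular bipartite simple graph on n vertices with largest adjacency eigenvalue λ₁ ≥ 7.11. Then E(G) ≥ n − 2 + 2λ₁ − 2·ln λ₁, and consequently E(G) ≥ n − 1 + λ₁, since λ₁ − 2 ln λ₁ − 1 > 0 for λ₁ ≥ 7.11. -/

import Mathlib

open Finset Matrix

lemma aux_det_sub {n : Type*} [Fintype n] [DecidableEq n] (A : Matrix n n ℝ)
    (hA : A.IsHermitian) (μ : ℝ) :
    det (A - μ • 1) = ∏ i, (hA.eigenvalues i - μ) := by
  have hU : (hA.eigenvectorUnitary : Matrix n n ℝ) * star (hA.eigenvectorUnitary : Matrix n n ℝ) = 1 :=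
    (Matrix.mem_unitaryGroup_iff).mp hA.eigenvectorUnitary.2
  have key : A - μ • 1
      = (hA.eigenvectorUnitary : Matrix n n ℝ) *
        (diagonal (RCLike.ofReal ∘ hA.eigenvalues) - μ • 1) *
        star (hA.eigenvectorUnitary : Matrix n n ℝ) := by
    rw [Matrix.mul_sub, Matrix.sub_mul, ← Unitary.conjStarAlgAut_apply (S := ℝ) (x := diagonal (RCLike.ofReal ∘ hA.eigenvalues)), ← hA.spectral_theorem]
    congr 1
    rw [Matrix.mul_smul, Matrix.mul_one, Matrix.smul_mul, hU]
  rw [key, det_mul_right_comm, hU, Matrix.one_mul, smul_one_eq_diagonal,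
    diagonal_sub, det_diagonal]
  simp [RCLike.ofReal_real_eq_id]

theorem stmt_12 {V : Type*} [Fintype V] [DecidableEq V]
    (G : SimpleGraph V) [DecidableRel G.Adj]
    (hconn : G.Connected) (hbip : G.Colorable 2)
    (hA : (G.adjMatrix ℝ).IsHermitian)
    (hdet : (G.adjMatrix ℝ).det ≠ 0)
    (lam1 : ℝ) (hlam1 : 7.11 ≤ lam1)
    (hmax : ∀ i, hA.eigenvalues i ≤ lam1) (hmem : ∃ i, hA.eigenvalues i = lam1) :
    ∑ i, |hA.eigenvalues i| ≥ (Fintype.card V : ℝ) - 2 + 2 * lam1 - 2 * Real.log lam1 ∧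
      ∑ i, |hA.eigenvalues i| ≥ (Fintype.card V : ℝ) - 1 + lam1 := by
  classical
  obtain ⟨i₀, hi₀⟩ := hmem
  set A := G.adjMatrix ℝ with hAdef
  set ev := hA.eigenvalues with hevdef
  have hlam0 : (0:ℝ) < lam1 := by linarith [hlam1]
  -- |det A| ≥ 1 since it is a nonzero integer
  have hmap : (G.adjMatrix ℤ).map (Int.cast : ℤ → ℝ) = G.adjMatrix ℝ := by
    ext i j
    simp [SimpleGraph.adjMatrix_apply, apply_ite (Int.cast : ℤ → ℝ)]
  have hdetZ : (((G.adjMatrix ℤ).det : ℤ) : ℝ) = A.det := by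
    rw [hAdef, ← hmap]
    exact (Int.castRingHom ℝ).map_det _
  have hZne : (G.adjMatrix ℤ).det ≠ 0 := by
    intro h
    apply hdet
    rw [← hdetZ, h, Int.cast_zero]
  have habs : (1:ℝ) ≤ |A.det| := by
    rw [← hdetZ, ← Int.cast_abs]
    exact_mod_cast Int.one_le_abs hZne
  -- product of eigenvalues equals determinant
  have hprod : ∏ i, ev i = A.det := by
    have := hA.det_eq_prod_eigenvalues
    simpa [RCLike.ofReal_real_eq_id] using this.symm
  have hev0 : ∀ i, ev i ≠ 0 := by
    intro i hi
    apply hdet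
    rw [← hprod]
    exact Finset.prod_eq_zero (mem_univ i) hi
  -- -lam1 is an eigenvalue, via the sign matrix from the 2-coloring
  obtain ⟨C⟩ := hbip
  set d : V → ℝ := fun v => if C v = 0 then 1 else -1 with hd
  have hdd : ∀ v, d v * d v = 1 := by
    intro v; by_cases h : C v = 0 <;> simp [hd, h]
  have hDD : diagonal d * diagonal d = 1 := by
    rw [diagonal_mul_diagonal]
    have : (fun v => d v * d v) = fun _ => (1:ℝ) := funext hdd
    rw [this, ← Matrix.diagonal_one]
  have hDAD : diagonal d * A * diagonal d = -A := by
    ext u v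
    by_cases h : G.Adj u v
    · have hne : C u ≠ C v := C.valid h
      have hduv : d u * d v = -1 := by
        rcases (by decide : ∀ x : Fin 2, x = 0 ∨ x = 1) (C u) with hu | hu <;>
        rcases (by decide : ∀ x : Fin 2, x = 0 ∨ x = 1) (C v) with hv | hv
        · exact absurd (hu.trans hv.symm) hne
        · simp [hd, hu, hv]
        · simp [hd, hu, hv]
        · exact absurd (hu.trans hv.symm) hne
      rw [Matrix.mul_diagonal, Matrix.diagonal_mul, Matrix.neg_apply]
      show d u * (G.adjMatrix ℝ) u v * d v = -((G.adjMatrix ℝ) u v)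
      simp only [SimpleGraph.adjMatrix_apply, if_pos h]
      linarith [hduv]
    · rw [Matrix.mul_diagonal, Matrix.diagonal_mul, Matrix.neg_apply]
      show d u * (G.adjMatrix ℝ) u v * d v = -((G.adjMatrix ℝ) u v)
      simp only [SimpleGraph.adjMatrix_apply, if_neg h]
      ring
  have hdet1 : det (A - lam1 • 1) = 0 := by
    rw [aux_det_sub A hA]
    exact Finset.prod_eq_zero (mem_univ i₀) (by rw [← hevdef, hi₀]; ring)
  have hdet2 : det (lam1 • 1 - A) = 0 := by
    have hns : lam1 • (1 : Matrix V V ℝ) - A = -(A - lam1 • 1) := (neg_sub _ _).symm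
    rw [hns, det_neg, hdet1, mul_zero]
  have hprod0 : ∏ i, (ev i - (-lam1)) = 0 := by
    rw [← aux_det_sub A hA]
    have key : A - (-lam1) • 1 = diagonal d * (lam1 • 1 - A) * diagonal d := by
      have e1 : diagonal d * (lam1 • 1 - A) * diagonal d
          = diagonal d * (lam1 • 1) * diagonal d - diagonal d * A * diagonal d := by
        rw [Matrix.mul_sub, Matrix.sub_mul]
      have e2 : diagonal d * (lam1 • 1) * diagonal d = lam1 • 1 := by
        rw [Matrix.mul_smul, Matrix.mul_one, Matrix.smul_mul, hDD]
      rw [e1, e2, hDAD]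
      module
    rw [key, det_mul_right_comm, hDD, Matrix.one_mul, hdet2]
  obtain ⟨j₀, _, hj₀⟩ := Finset.prod_eq_zero_iff.mp hprod0
  have hj₀' : ev j₀ = -lam1 := by linarith [sub_eq_zero.mp hj₀]
  have hij : i₀ ≠ j₀ := by
    intro h; rw [h, hj₀'] at hi₀; linarith
  -- split the sum
  have hn2 : 2 ≤ Fintype.card V := by
    have : Nontrivial V := ⟨i₀, j₀, hij⟩
    exact Fintype.one_lt_card
  set s : Finset V := univ \ {i₀, j₀} with hs
  have hpairsub : ({i₀, j₀} : Finset V) ⊆ univ := subset_univ _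
  have hscard : (s.card : ℝ) = (Fintype.card V : ℝ) - 2 := by
    rw [hs, Finset.card_sdiff_of_subset hpairsub, Finset.card_pair hij, Finset.card_univ]
    push_cast [Nat.cast_sub hn2]
    ring
  have habsi₀ : |ev i₀| = lam1 := by rw [hi₀, abs_of_pos hlam0]
  have habsj₀ : |ev j₀| = lam1 := by rw [hj₀', abs_neg, abs_of_pos hlam0]
  have hsum_split : ∑ i, |ev i| = lam1 + lam1 + ∑ i ∈ s, |ev i| := by
    rw [← Finset.sum_sdiff hpairsub, ← hs, Finset.sum_pair hij, habsi₀, habsj₀]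
    ring
  have hprod_split : ∏ i, |ev i| = lam1 * lam1 * ∏ i ∈ s, |ev i| := by
    rw [← Finset.prod_sdiff hpairsub, ← hs, Finset.prod_pair hij, habsi₀, habsj₀]
    ring
  have habsprod : (1:ℝ) ≤ ∏ i, |ev i| := by
    rw [← Finset.abs_prod, hprod]
    exact habs
  have hsprod_pos : (0:ℝ) < ∏ i ∈ s, |ev i| := by
    apply Finset.prod_pos
    intro i _
    exact abs_pos.mpr (hev0 i)
  have hsprod_ge : (lam1 * lam1)⁻¹ ≤ ∏ i ∈ s, |ev i| := by
    rw [inv_le_iff_one_le_mul₀ (by positivity)]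
    calc (1:ℝ) ≤ ∏ i, |ev i| := habsprod
      _ = lam1 * lam1 * ∏ i ∈ s, |ev i| := hprod_split
      _ = (∏ i ∈ s, |ev i|) * (lam1 * lam1) := by ring
  have hlog_ge : -(2 * Real.log lam1) ≤ Real.log (∏ i ∈ s, |ev i|) := by
    have h1 : Real.log ((lam1 * lam1)⁻¹) ≤ Real.log (∏ i ∈ s, |ev i|) :=
      Real.log_le_log (by positivity) hsprod_ge
    rwa [Real.log_inv, Real.log_mul (ne_of_gt hlam0) (ne_of_gt hlam0), ← two_mul] at h1
  have hrest : (s.card : ℝ) + Real.log (∏ i ∈ s, |ev i|) ≤ ∑ i ∈ s, |ev i| := by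
    have hstep : ∀ i ∈ s, 1 + Real.log |ev i| ≤ |ev i| := by
      intro i _
      have := Real.log_le_sub_one_of_pos (abs_pos.mpr (hev0 i))
      linarith
    calc (s.card : ℝ) + Real.log (∏ i ∈ s, |ev i|)
        = ∑ i ∈ s, (1 + Real.log |ev i|) := by
          rw [Finset.sum_add_distrib, Finset.sum_const, nsmul_eq_mul, mul_one,
            Real.log_prod (fun i _ => abs_ne_zero.mpr (hev0 i))]
      _ ≤ ∑ i ∈ s, |ev i| := Finset.sum_le_sum hstep
  have main : ∑ i, |ev i| ≥ (Fintype.card V : ℝ) - 2 + 2 * lam1 - 2 * Real.log lam1 := by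
    rw [hsum_split]
    have := hrest
    rw [hscard] at this
    linarith [hlog_ge]
  constructor
  · exact main
  · -- lam1 - 2 log lam1 - 1 ≥ 0
    have hlogbd : 2 * Real.log lam1 ≤ lam1 - 1 := by
      have h1 : Real.log lam1 ≤ Real.log 7.11 + (lam1 / 7.11 - 1) := by
        have heq : Real.log lam1 = Real.log 7.11 + Real.log (lam1 / 7.11) := by
          rw [← Real.log_mul (by norm_num) (by positivity),
            mul_div_cancel₀ _ (show (7.11:ℝ) ≠ 0 by norm_num)]
        have h2 := Real.log_le_sub_one_of_pos (show (0:ℝ) < lam1 / 7.11 by positivity)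
        linarith
      have h3 : Real.log 7.11 ≤ 3.055 := by
        rw [Real.log_le_iff_le_exp (by norm_num)]
        have h4 : (3.055:ℝ) = (4:ℕ) * 0.76375 := by norm_num
        rw [h4, Real.exp_nat_mul]
        calc (7.11:ℝ) ≤ 1.76375 ^ 4 := by norm_num
          _ ≤ Real.exp 0.76375 ^ 4 := by
            apply pow_le_pow_left₀ (by norm_num)
            linarith [Real.add_one_le_exp (0.76375 : ℝ)]
      have h4 : lam1 / 7.11 ≤ lam1 * (100/711) := by norm_num [div_eq_mul_inv]
      linarith
    linarith [main]
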